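/- (A posteriori error bound, Proposition 1.) Let T > 0 and X = ℝ^d with canonical inner product ⟨·,·⟩_X and norm ‖·‖_X. Let V : [0, T] → ℝ^{d×r} be continuously differentiable with V(t)ᵀ V(t) = I_r for all t, and set Π(t) = V(t) V(t)ᵀ. Let f : X × [0, T] → X be continuous, let u : [0, T] → X be continuously differentiable with u′(t) = f(u(t), t), and let α : [0, T] → ℝ^r be continuously differentiable such that u_r(t) = V(t) α(t) satisfies the Galerkin condition Π(t) u_r′(t) = Π(t) f(u_r(t), t) for all t. Let L : [0, T] → ℝ be continuous such that for all t ∈ [0, T] and all w ∈ X, ⟨w − u_r(t), f(w, t) − f(u_r(t), t)⟩_X ≤ L(t) ‖w − u_r(t)‖_X², and define the residual r(t) = (I_d − Π(t)) (V′(t) V(t)ᵀ u_r(t) − f(u_r(t), t)). Then for all t ∈ [0, T], ‖u(t) − u_r(t)‖_X ≤ e^{Γ(t)} (‖u(0) − u_r(0)‖_X + ∫₀ᵗ e^{−Γ(τ)} ‖r(τ)‖_X dτ), where Γ(t) = ∫₀ᵗ L(τ) dτ. -/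

import Mathlib

open RealInnerProductSpace

attribute [local instance] Matrix.normedAddCommGroup Matrix.normedSpace

open Set in
lemma gronwall_aux {g L ρ : ℝ → ℝ} {a b : ℝ}
    (hg : ContinuousOn g (Set.Icc a b)) (hL : Continuous L) (hρ : Continuous ρ)
    (hg' : ∀ x ∈ Set.Ico a b, ∀ r, L x * g x + ρ x < r →
      ∃ᶠ z in nhdsWithin x (Set.Ioi x), slope g x z < r) :
    ∀ x ∈ Set.Icc a b, g x ≤ Real.exp (∫ s in a..x, L s) *
      (g a + ∫ τ in a..x, Real.exp (-(∫ s in a..τ, L s)) * ρ τ) := by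
  set Γ : ℝ → ℝ := fun x => ∫ s in a..x, L s with hΓdef
  have hΓ : ∀ x, HasDerivAt Γ (L x) x := fun x => (hL.integral_hasStrictDerivAt a x).hasDerivAt
  have hΓc : Continuous Γ := by
    rw [continuous_iff_continuousAt]; exact fun x => (hΓ x).continuousAt
  set h : ℝ → ℝ := fun τ => Real.exp (-Γ τ) * ρ τ with hhdef
  have hhc : Continuous h := (hΓc.neg.rexp).mul hρ
  set I : ℝ → ℝ := fun x => ∫ τ in a..x, h τ with hIdef
  have hI : ∀ x, HasDerivAt I (h x) x := fun x => (hhc.integral_hasStrictDerivAt a x).hasDerivAt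
  have key : ∀ ε > 0, ∀ x ∈ Icc a b,
      g x ≤ Real.exp (Γ x) * (g a + ε + ε * (x - a) + I x) := by
    intro ε hε
    set B : ℝ → ℝ := fun x => Real.exp (Γ x) * (g a + ε + ε * (x - a) + I x) with hBdef
    have hB : ∀ x, HasDerivAt B (L x * B x + (ρ x + ε * Real.exp (Γ x))) x := by
      intro x
      have hexp : Real.exp (Γ x) * h x = ρ x := by
        simp only [hhdef]
        rw [Real.exp_neg, ← mul_assoc, mul_inv_cancel₀ (Real.exp_ne_zero _), one_mul]
      have h1 : HasDerivAt (fun x => Real.exp (Γ x)) (Real.exp (Γ x) * L x) x := (hΓ x).exp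
      have h2 : HasDerivAt (fun x => g a + ε + ε * (x - a) + I x) (ε + h x) x := by
        have h3 : HasDerivAt (fun x : ℝ => ε * (x - a)) ε x := by
          simpa using ((hasDerivAt_id x).sub_const a).const_mul ε
        exact (h3.const_add (g a + ε)).add (hI x)
      have h4 : HasDerivAt (fun x => Real.exp (Γ x) * (g a + ε + ε * (x - a) + I x)) _ x := h1.mul h2
      convert h4 using 1
      simp only [hBdef]
      rw [mul_add (Real.exp (Γ x)) ε (h x), hexp]
      ring
    have hBa : B a = g a + ε := by
      simp [hBdef, hIdef, hΓdef, intervalIntegral.integral_same]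
    have bound : ∀ x ∈ Ico a b, g x = B x →
        L x * g x + ρ x < L x * B x + (ρ x + ε * Real.exp (Γ x)) := by
      intro x _ hgB
      have : 0 < ε * Real.exp (Γ x) := mul_pos hε (Real.exp_pos _)
      rw [hgB]; linarith
    exact fun x hx => image_le_of_liminf_slope_right_lt_deriv_boundary hg hg'
      (by rw [hBa]; linarith) (fun x => hB x) bound hx
  intro x hx
  refine le_of_forall_pos_le_add ?_
  intro ε hε
  set C := Real.exp (Γ x) * (1 + (x - a)) with hCdef
  have hC : 0 < C := mul_pos (Real.exp_pos _) (by linarith [hx.1])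
  have hk2 := key (ε / C) (div_pos hε hC) x hx
  have heq : Real.exp (Γ x) * (g a + ε / C + ε / C * (x - a) + I x)
      = Real.exp (Γ x) * (g a + I x) + (ε / C) * C := by
    rw [hCdef]; ring
  rw [heq, div_mul_cancel₀ _ hC.ne'] at hk2
  exact hk2

noncomputable def toECLM2 (d r : ℕ) : Matrix (Fin d) (Fin r) ℝ →L[ℝ]
    (EuclideanSpace ℝ (Fin r) →L[ℝ] EuclideanSpace ℝ (Fin d)) :=
  LinearMap.toContinuousLinearMap
    ((LinearMap.toContinuousLinearMap.toLinearMap).comp (Matrix.toEuclideanLin).toLinearMap)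

theorem stmt_3 (d r : ℕ) (T : ℝ) (hT : 0 < T)
    (V V' : ℝ → Matrix (Fin d) (Fin r) ℝ)
    (hV : ∀ t ∈ Set.Icc (0:ℝ) T, HasDerivWithinAt V (V' t) (Set.Icc 0 T) t)
    (hV' : ContinuousOn V' (Set.Icc 0 T))
    (horth : ∀ t ∈ Set.Icc (0:ℝ) T, (V t).transpose * V t = 1)
    (f : EuclideanSpace ℝ (Fin d) → ℝ → EuclideanSpace ℝ (Fin d))
    (hf : ContinuousOn (fun p : EuclideanSpace ℝ (Fin d) × ℝ => f p.1 p.2)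
      (Set.univ ×ˢ Set.Icc 0 T))
    (u : ℝ → EuclideanSpace ℝ (Fin d))
    (hu : ∀ t ∈ Set.Icc (0:ℝ) T, HasDerivWithinAt u (f (u t) t) (Set.Icc 0 T) t)
    (α α' : ℝ → EuclideanSpace ℝ (Fin r))
    (hα : ∀ t ∈ Set.Icc (0:ℝ) T, HasDerivWithinAt α (α' t) (Set.Icc 0 T) t)
    (hα' : ContinuousOn α' (Set.Icc 0 T))
    (ur ur' : ℝ → EuclideanSpace ℝ (Fin d))
    (hur : ∀ t, ur t = Matrix.toEuclideanLin (V t) (α t))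
    (hurd : ∀ t ∈ Set.Icc (0:ℝ) T, HasDerivWithinAt ur (ur' t) (Set.Icc 0 T) t)
    (hGal : ∀ t ∈ Set.Icc (0:ℝ) T,
      Matrix.toEuclideanLin (V t * (V t).transpose) (ur' t) =
        Matrix.toEuclideanLin (V t * (V t).transpose) (f (ur t) t))
    (L : ℝ → ℝ) (hL : ContinuousOn L (Set.Icc 0 T))
    (hlog : ∀ t ∈ Set.Icc (0:ℝ) T, ∀ w : EuclideanSpace ℝ (Fin d),
      ⟪w - ur t, f w t - f (ur t) t⟫ ≤ L t * ‖w - ur t‖ ^ 2)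
    (res : ℝ → EuclideanSpace ℝ (Fin d))
    (hres : ∀ t, res t = Matrix.toEuclideanLin (1 - V t * (V t).transpose)
      (Matrix.toEuclideanLin (V' t * (V t).transpose) (ur t) - f (ur t) t)) :
    ∀ t ∈ Set.Icc (0:ℝ) T,
      ‖u t - ur t‖ ≤ Real.exp (∫ τ in (0:ℝ)..t, L τ) *
        (‖u 0 - ur 0‖ +
          ∫ τ in (0:ℝ)..t, Real.exp (-(∫ s in (0:ℝ)..τ, L s)) * ‖res τ‖) := by
  have hT' : (0:ℝ) ≤ T := hT.le
  have hUD : UniqueDiffOn ℝ (Set.Icc (0:ℝ) T) := uniqueDiffOn_Icc hT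
  -- derivative of ur
  have hurd2 : ∀ t ∈ Set.Icc (0:ℝ) T, HasDerivWithinAt ur
      (toECLM2 d r (V' t) (α t) + toECLM2 d r (V t) (α' t)) (Set.Icc 0 T) t := by
    intro t ht
    have hVc : HasDerivWithinAt (fun s => toECLM2 d r (V s)) (toECLM2 d r (V' t))
        (Set.Icc 0 T) t :=
      (toECLM2 d r).hasFDerivAt.comp_hasDerivWithinAt t (hV t ht)
    have h1 := hVc.clm_apply (hα t ht)
    exact h1.congr (fun s _ => hur s) (hur t)
  have hureq : ∀ t ∈ Set.Icc (0:ℝ) T,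
      ur' t = toECLM2 d r (V' t) (α t) + toECLM2 d r (V t) (α' t) := by
    intro t ht
    rw [← (hurd t ht).derivWithin (hUD t ht), (hurd2 t ht).derivWithin (hUD t ht)]
  -- key identity : ur' - f(ur) = res on [0,T]
  have hkey : ∀ t ∈ Set.Icc (0:ℝ) T, ur' t - f (ur t) t = res t := by
    intro t ht
    set w : EuclideanSpace ℝ (Fin d) := f (ur t) t with hw
    have hA : (V t).transpose * V t = 1 := horth t ht
    have hu0 : @Eq (Fin d → ℝ) (ur t) (Matrix.mulVec (V t) (α t)) := congrArg WithLp.ofLp (hur t)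
    have hg0 : @Eq (Fin d → ℝ) (Matrix.mulVec (V t * (V t).transpose) (ur' t))
        (Matrix.mulVec (V t * (V t).transpose) w) := congrArg WithLp.ofLp (hGal t ht)
    have hd0 : @Eq (Fin d → ℝ) (ur' t)
        (Matrix.mulVec (V' t) (α t) + Matrix.mulVec (V t) (α' t)) := congrArg WithLp.ofLp (hureq t ht)
    have hr0 : @Eq (Fin d → ℝ) (res t) (Matrix.mulVec (1 - V t * (V t).transpose)
        (@HSub.hSub (Fin d → ℝ) _ _ instHSub (Matrix.mulVec (V' t * (V t).transpose) (ur t)) w)) := congrArg WithLp.ofLp (hres t)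
    have e1 : @Eq (Fin d → ℝ)
        (Matrix.mulVec (V t * (V t).transpose) (Matrix.mulVec (V t) (α' t)))
        (Matrix.mulVec (V t) (α' t)) := by
      rw [Matrix.mulVec_mulVec, Matrix.mul_assoc, hA, Matrix.mul_one]
    have e2 : @Eq (Fin d → ℝ)
        (Matrix.mulVec (V' t * (V t).transpose) (Matrix.mulVec (V t) (α t)))
        (Matrix.mulVec (V' t) (α t)) := by
      rw [Matrix.mulVec_mulVec, Matrix.mul_assoc, hA, Matrix.mul_one]
    have hAa : @Eq (Fin d → ℝ) (Matrix.mulVec (V' t) (α t))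
        (@HSub.hSub (Fin d → ℝ) _ _ instHSub (ur' t) (Matrix.mulVec (V t) (α' t))) := by
      rw [hd0]; abel
    have h6 : @Eq (Fin d → ℝ)
        (Matrix.mulVec (V t * (V t).transpose) (Matrix.mulVec (V' t) (α t)))
        (Matrix.mulVec (V t * (V t).transpose) w - Matrix.mulVec (V t) (α' t)) := by
      rw [hAa, Matrix.mulVec_sub, hg0, e1]
    apply WithLp.ofLp_injective
    show @HSub.hSub (Fin d → ℝ) _ _ instHSub (ur' t) w = res t
    rw [hr0, hu0, e2, Matrix.sub_mulVec, Matrix.one_mulVec, Matrix.mulVec_sub, h6, hd0]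
    module
  -- continuity facts
  have hcontu : ContinuousOn u (Set.Icc 0 T) := fun s hs => (hu s hs).continuousWithinAt
  have hcontur : ContinuousOn ur (Set.Icc 0 T) := fun s hs => (hurd s hs).continuousWithinAt
  have hcontV : ContinuousOn V (Set.Icc 0 T) := fun s hs => (hV s hs).continuousWithinAt
  have hcontα : ContinuousOn α (Set.Icc 0 T) := fun s hs => (hα s hs).continuousWithinAt
  have hcontg : ContinuousOn (fun s => ‖u s - ur s‖) (Set.Icc 0 T) := (hcontu.sub hcontur).norm
  have hcontfur : ContinuousOn (fun s => f (ur s) s) (Set.Icc 0 T) := by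
    have : ContinuousOn (fun s : ℝ => (ur s, s)) (Set.Icc 0 T) :=
      hcontur.prodMk continuousOn_id
    exact hf.comp this (fun s hs => ⟨trivial, hs⟩)
  have hcontur' : ContinuousOn ur' (Set.Icc 0 T) := by
    have h1 : ContinuousOn (fun s => toECLM2 d r (V' s) (α s) + toECLM2 d r (V s) (α' s))
        (Set.Icc 0 T) :=
      (((toECLM2 d r).continuous.comp_continuousOn hV').clm_apply hcontα).add
        (((toECLM2 d r).continuous.comp_continuousOn hcontV).clm_apply hα')
    exact h1.congr hureq
  have hcontres : ContinuousOn res (Set.Icc 0 T) :=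
    (hcontur'.sub hcontfur).congr (fun s hs => (hkey s hs).symm)
  -- extensions of L and ‖res‖
  set Lc : ℝ → ℝ := fun s => L (Set.projIcc 0 T hT' s) with hLcdef
  set ρc : ℝ → ℝ := fun s => ‖res (Set.projIcc 0 T hT' s)‖ with hρcdef
  have hLc : Continuous Lc := hL.restrict.comp continuous_projIcc
  have hρc : Continuous ρc := (hcontres.norm.restrict).comp continuous_projIcc
  have hLeq : ∀ s ∈ Set.Icc (0:ℝ) T, Lc s = L s := fun s hs => by
    simp only [hLcdef, Set.projIcc_of_mem hT' hs]
  have hρeq : ∀ s ∈ Set.Icc (0:ℝ) T, ρc s = ‖res s‖ := fun s hs => by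
    simp only [hρcdef, Set.projIcc_of_mem hT' hs]
  -- the Dini-derivative bound
  have hdini : ∀ x ∈ Set.Ico (0:ℝ) T, ∀ r', Lc x * ‖u x - ur x‖ + ρc x < r' →
      ∃ᶠ z in nhdsWithin x (Set.Ioi x), slope (fun s => ‖u s - ur s‖) x z < r' := by
    intro x hx r' hr'
    have hxI : x ∈ Set.Icc (0:ℝ) T := Set.Ico_subset_Icc_self hx
    rw [hLeq x hxI, hρeq x hxI] at hr'
    have hmem : Set.Icc (0:ℝ) T ∈ nhdsWithin x (Set.Ici x) := by
      rw [mem_nhdsWithin]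
      exact ⟨Set.Iio T, isOpen_Iio, hx.2, fun z hz => ⟨hx.1.trans hz.2, hz.1.le⟩⟩
    have he : HasDerivWithinAt (fun s => u s - ur s) (f (u x) x - ur' x) (Set.Ici x) x :=
      ((hu x hxI).sub (hurd x hxI)).mono_of_mem_nhdsWithin hmem
    by_cases h0 : u x = ur x
    · have hder : f (u x) x - ur' x = -(res x) := by
        rw [h0, ← hkey x hxI]; abel
      have hnorm : ‖f (u x) x - ur' x‖ < r' := by
        rw [hder, norm_neg]
        have hz : ‖u x - ur x‖ = 0 := by rw [h0, sub_self, norm_zero]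
        rw [hz, mul_zero, zero_add] at hr'
        exact hr'
      have hfreq := he.liminf_right_slope_norm_le hnorm
      refine hfreq.mono fun z hz => ?_
      rw [slope_def_field, div_eq_inv_mul]
      exact hz
    · have hne : u x - ur x ≠ 0 := sub_ne_zero.2 h0
      have hnpos : 0 < ‖u x - ur x‖ := norm_pos_iff.2 hne
      have hq : HasDerivWithinAt (fun s => ⟪u s - ur s, u s - ur s⟫)
          (⟪u x - ur x, f (u x) x - ur' x⟫ + ⟪f (u x) x - ur' x, u x - ur x⟫)
          (Set.Ici x) x := he.inner ℝ he
      have hqx : ⟪u x - ur x, u x - ur x⟫ ≠ 0 := by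
        rw [real_inner_self_eq_norm_mul_norm]
        positivity
      have hsq := (Real.hasDerivAt_sqrt hqx).comp_hasDerivWithinAt x hq
      have hgs : ∀ s, Real.sqrt ⟪u s - ur s, u s - ur s⟫ = ‖u s - ur s‖ := fun s => by
        rw [real_inner_self_eq_norm_mul_norm, Real.sqrt_mul_self (norm_nonneg _)]
      have hgderiv : HasDerivWithinAt (fun s => ‖u s - ur s‖)
          (1 / (2 * Real.sqrt ⟪u x - ur x, u x - ur x⟫) *
            (⟪u x - ur x, f (u x) x - ur' x⟫ + ⟪f (u x) x - ur' x, u x - ur x⟫))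
          (Set.Ici x) x := by
        refine hsq.congr (fun s _ => (hgs s).symm) (hgs x).symm
      have hip : ⟪u x - ur x, f (u x) x - ur' x⟫ ≤
          L x * ‖u x - ur x‖ ^ 2 + ‖res x‖ * ‖u x - ur x‖ := by
        have hsplit : f (u x) x - ur' x = (f (u x) x - f (ur x) x) + (-(res x)) := by
          rw [← hkey x hxI]; abel
        rw [hsplit, inner_add_right]
        have h1 := hlog x hxI (u x)
        have h2 : ⟪u x - ur x, -(res x)⟫ ≤ ‖res x‖ * ‖u x - ur x‖ := by
          calc ⟪u x - ur x, -(res x)⟫ ≤ ‖u x - ur x‖ * ‖-(res x)‖ := real_inner_le_norm _ _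
            _ = ‖res x‖ * ‖u x - ur x‖ := by rw [norm_neg]; ring
        linarith
      have hD : 1 / (2 * Real.sqrt ⟪u x - ur x, u x - ur x⟫) *
          (⟪u x - ur x, f (u x) x - ur' x⟫ + ⟪f (u x) x - ur' x, u x - ur x⟫) < r' := by
        rw [hgs x]
        have hsymm : ⟪f (u x) x - ur' x, u x - ur x⟫ = ⟪u x - ur x, f (u x) x - ur' x⟫ :=
          real_inner_comm _ _
        rw [hsymm]
        have hcalc : 1 / (2 * ‖u x - ur x‖) *
            (⟪u x - ur x, f (u x) x - ur' x⟫ + ⟪u x - ur x, f (u x) x - ur' x⟫)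
            = ⟪u x - ur x, f (u x) x - ur' x⟫ / ‖u x - ur x‖ := by
          field_simp
          ring
        rw [hcalc]
        rw [div_lt_iff₀ hnpos]
        calc ⟪u x - ur x, f (u x) x - ur' x⟫
            ≤ L x * ‖u x - ur x‖ ^ 2 + ‖res x‖ * ‖u x - ur x‖ := hip
          _ = (L x * ‖u x - ur x‖ + ‖res x‖) * ‖u x - ur x‖ := by ring
          _ < r' * ‖u x - ur x‖ := mul_lt_mul_of_pos_right hr' hnpos
      exact hgderiv.liminf_right_slope_le hD
  -- apply the Grönwall lemma
  have hmain := gronwall_aux hcontg hLc hρc hdini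
  intro t ht
  have hG : ∀ τ ∈ Set.Icc (0:ℝ) T, (∫ s in (0:ℝ)..τ, Lc s) = ∫ s in (0:ℝ)..τ, L s := by
    intro τ hτ
    apply intervalIntegral.integral_congr
    intro s hs
    rw [Set.uIcc_of_le hτ.1] at hs
    exact hLeq s ⟨hs.1, hs.2.trans hτ.2⟩
  have hInt : (∫ τ in (0:ℝ)..t, Real.exp (-(∫ s in (0:ℝ)..τ, Lc s)) * ρc τ)
      = ∫ τ in (0:ℝ)..t, Real.exp (-(∫ s in (0:ℝ)..τ, L s)) * ‖res τ‖ := by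
    apply intervalIntegral.integral_congr
    intro τ hτ
    rw [Set.uIcc_of_le ht.1] at hτ
    have hτ' : τ ∈ Set.Icc (0:ℝ) T := ⟨hτ.1, hτ.2.trans ht.2⟩
    show Real.exp (-(∫ s in (0:ℝ)..τ, Lc s)) * ρc τ
      = Real.exp (-(∫ s in (0:ℝ)..τ, L s)) * ‖res τ‖
    rw [hG τ hτ', hρeq τ hτ']
  have hfin := hmain t ht
  rw [hG t ht, hInt] at hfin
  exact hfin
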